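/- arXiv:2201.10172 — 2 statements merged into one kernel-verified Lean document; each statement's English description precedes it below -/
import Mathlib

section
/- Let G = BS(m,n) be the Baumslag–Solitar group with 0 < m ≤ |n|, and suppose d = gcd(m,n) is a power of a prime number p (d = p^μ with μ ≥ 1). Then [t^{-k} a^d t^k, a] ∈ [γ_ω(G), G] and [t^{-k} a t^k, a^d] ∈ [γ_ω(G), G] for all natural numbers k. -/
def BSRels (m n : ℤ) : Set (FreeGroup (Fin 2)) :=
  {(FreeGroup.of 0)⁻¹ * (FreeGroup.of 1) ^ m * FreeGroup.of 0 * ((FreeGroup.of 1) ^ n)⁻¹}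

/-- The Baumslag–Solitar group `BS(m,n) = ⟨t, a ∣ t⁻¹ aᵐ t = aⁿ⟩`. -/
abbrev BS (m n : ℤ) : Type := PresentedGroup (BSRels m n)

/-- The generator `t` of `BS(m,n)`. -/
def BS.t (m n : ℤ) : BS m n := PresentedGroup.of 0

/-- The generator `a` of `BS(m,n)`. -/
def BS.a (m n : ℤ) : BS m n := PresentedGroup.of 1

/-- `γ_ω(G)`: the intersection of all terms of the lower central series
(`lowerCentralSeries G c` is `γ_{c+1}(G)`). -/
def lcsOmega (G : Type*) [Group G] : Subgroup G := ⨅ c : ℕ, (⊤ : Subgroup G).lowerCentralSeries c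

/-- The commutator `[x,y] = x⁻¹y⁻¹xy`. -/
def commElt {G : Type*} [Group G] (x y : G) : G := x⁻¹ * y⁻¹ * x * y


section Auxiliary
variable {Γ : Type*} [Group Γ]
open scoped commutatorElement


lemma zpow_kill (x : Γ) (a b : ℤ) (h1 : x ^ a = 1) (h2 : x ^ b = 1)
    (h : Int.gcd a b = 1) : x = 1 := by
  have hb : ((Int.gcd a b : ℤ)) = a * Int.gcdA a b + b * Int.gcdB a b := Int.gcd_eq_gcd_ab a b
  rw [h] at hb
  calc x = x ^ ((1:ℕ) : ℤ) := by simp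
    _ = x ^ (a * Int.gcdA a b + b * Int.gcdB a b) := by rw [← hb]
    _ = (x ^ a) ^ Int.gcdA a b * (x ^ b) ^ Int.gcdB a b := by
        rw [zpow_add, zpow_mul, zpow_mul]
    _ = 1 := by rw [h1, h2, one_zpow, one_zpow, one_mul]

lemma zpowers_zpow_gcd (x : Γ) (s : ℤ) :
    Subgroup.zpowers (x ^ s) =
      Subgroup.zpowers (x ^ ((Nat.gcd (orderOf x) s.natAbs : ℕ) : ℤ)) := by
  set A := orderOf x with hA
  set g : ℕ := Nat.gcd A s.natAbs with hg
  have habs : x ^ ((s.natAbs : ℕ) : ℤ) = x ^ s ∨ x ^ ((s.natAbs : ℕ) : ℤ) = (x ^ s)⁻¹ := by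
    rcases Int.natAbs_eq s with h | h
    · left; rw [← h]
    · right; rw [← zpow_neg]; exact congrArg (x ^ ·) (by omega)
  apply le_antisymm
  · rw [Subgroup.zpowers_le]
    have hdvd : (g : ℤ) ∣ s := by
      have : (g:ℤ) ∣ (s.natAbs : ℤ) := Int.natCast_dvd_natCast.mpr (Nat.gcd_dvd_right _ _)
      rcases Int.natAbs_eq s with h | h
      · rw [h]; exact this
      · rw [h]; exact dvd_neg.mpr this
    obtain ⟨w, hw⟩ := hdvd
    have : x ^ s = (x ^ ((g:ℕ):ℤ)) ^ w := by rw [← zpow_mul, ← hw]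
    rw [this]
    exact Subgroup.zpow_mem _ (Subgroup.mem_zpowers _) _
  · rw [Subgroup.zpowers_le]
    have hb : ((g:ℕ) : ℤ) = A * Nat.gcdA A s.natAbs + s.natAbs * Nat.gcdB A s.natAbs :=
      Nat.gcd_eq_gcd_ab A s.natAbs
    have h1 : x ^ ((A:ℕ) : ℤ) = 1 := by
      rw [zpow_natCast, pow_orderOf_eq_one]
    have : x ^ ((g:ℕ):ℤ) = (x ^ ((s.natAbs : ℕ):ℤ)) ^ Nat.gcdB A s.natAbs := by
      rw [hb, zpow_add, zpow_mul, zpow_mul, h1, one_zpow, one_mul]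
    rcases habs with h | h
    · rw [this, h]; exact Subgroup.zpow_mem _ (Subgroup.mem_zpowers _) _
    · rw [this, h]; exact Subgroup.zpow_mem _ (Subgroup.inv_mem _ (Subgroup.mem_zpowers _)) _

lemma orderOf_conj' (x g : Γ) : orderOf (g⁻¹ * x * g) = orderOf x := by
  have : g⁻¹ * x * g = (MulAut.conj g⁻¹) x := by simp [MulAut.conj_apply]
  rw [this]
  exact orderOf_injective (MulAut.conj g⁻¹).toMonoidHom (MulAut.conj g⁻¹).injective x

lemma KL (x g : Γ) (hx : IsOfFinOrder x) (m n : ℤ) (hm : m ≠ 0) (hn : n ≠ 0)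
    (hrel : (g⁻¹ * x * g) ^ m = x ^ n) (d : ℕ) (hd : (d : ℤ) = Int.gcd m n) :
    Subgroup.zpowers ((g⁻¹ * x * g) ^ (d:ℤ)) = Subgroup.zpowers (x ^ (d:ℤ)) := by
  set y := g⁻¹ * x * g with hy
  set A := orderOf x with hA
  have hApos : 0 < A := hx.orderOf_pos
  have hAy : orderOf y = A := orderOf_conj' x g
  -- same order of the two power elements
  have habs : ∀ (z : Γ) (s : ℤ), z ^ s.natAbs = z ^ s ∨ z ^ s.natAbs = (z ^ s)⁻¹ := by
    intro z s
    rcases Int.natAbs_eq s with h | h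
    · left; conv_rhs => rw [h]
      rw [zpow_natCast]
    · right; conv_rhs => rw [h]
      rw [zpow_neg, inv_inv, zpow_natCast]
  have hord : orderOf (y ^ m.natAbs) = orderOf (x ^ n.natAbs) := by
    have h1 : orderOf (y ^ m.natAbs) = orderOf (y ^ (m:ℤ)) := by
      rcases habs y m with h | h
      · rw [h]
      · rw [h, orderOf_inv]
    have h2 : orderOf (x ^ n.natAbs) = orderOf (x ^ (n:ℤ)) := by
      rcases habs x n with h | h
      · rw [h]
      · rw [h, orderOf_inv]
    rw [h1, h2, hrel]
  have hgcd_eq : Nat.gcd A m.natAbs = Nat.gcd A n.natAbs := by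
    have e1 : orderOf (y ^ m.natAbs) = A / Nat.gcd A m.natAbs := by
      rw [orderOf_pow' y (by simpa using hm), hAy]
    have e2 : orderOf (x ^ n.natAbs) = A / Nat.gcd A n.natAbs := by
      rw [orderOf_pow' x (by simpa using hn), ← hA]
    have hdiv : A / Nat.gcd A m.natAbs = A / Nat.gcd A n.natAbs := by
      rw [← e1, ← e2, hord]
    have d1 : Nat.gcd A m.natAbs ∣ A := Nat.gcd_dvd_left _ _
    have d2 : Nat.gcd A n.natAbs ∣ A := Nat.gcd_dvd_left _ _
    calc Nat.gcd A m.natAbs = A / (A / Nat.gcd A m.natAbs) := (Nat.div_div_self d1 hApos.ne').symm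
      _ = A / (A / Nat.gcd A n.natAbs) := by rw [hdiv]
      _ = Nat.gcd A n.natAbs := Nat.div_div_self d2 hApos.ne'
  have hdnat : d = Nat.gcd m.natAbs n.natAbs := by
    have : (d : ℤ) = ((Nat.gcd m.natAbs n.natAbs : ℕ) : ℤ) := by
      rw [hd]; rfl
    exact_mod_cast this
  have hgd : Nat.gcd A d = Nat.gcd A m.natAbs := by
    apply Nat.dvd_antisymm
    · exact Nat.dvd_gcd (Nat.gcd_dvd_left _ _)
        ((Nat.gcd_dvd_right A d).trans (hdnat ▸ Nat.gcd_dvd_left _ _))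
    · refine Nat.dvd_gcd (Nat.gcd_dvd_left _ _) ?_
      rw [hdnat]
      exact Nat.dvd_gcd (Nat.gcd_dvd_right A m.natAbs)
        (hgcd_eq ▸ Nat.gcd_dvd_right A n.natAbs)
  -- chain
  have c1 : Subgroup.zpowers (y ^ (d:ℤ)) = Subgroup.zpowers (y ^ ((Nat.gcd A d : ℕ) : ℤ)) := by
    have := zpowers_zpow_gcd y ((d:ℕ):ℤ)
    rwa [hAy, Int.natAbs_natCast] at this
  have c2 : Subgroup.zpowers (y ^ (m:ℤ)) = Subgroup.zpowers (y ^ ((Nat.gcd A m.natAbs : ℕ) : ℤ)) := by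
    have := zpowers_zpow_gcd y m
    rwa [hAy] at this
  have c3 : Subgroup.zpowers (x ^ (n:ℤ)) = Subgroup.zpowers (x ^ ((Nat.gcd A n.natAbs : ℕ) : ℤ)) := by
    have := zpowers_zpow_gcd x n
    rwa [← hA] at this
  have c4 : Subgroup.zpowers (x ^ (d:ℤ)) = Subgroup.zpowers (x ^ ((Nat.gcd A d : ℕ) : ℤ)) := by
    have := zpowers_zpow_gcd x ((d:ℕ):ℤ)
    rwa [← hA, Int.natAbs_natCast] at this
  rw [c1, hgd, ← c2, hrel, c3, ← hgcd_eq, ← hgd, ← c4]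

lemma comm_zpow_left (x y : Γ) (hc : ∀ w : Γ, Commute ⁅x, y⁆ w) :
    ∀ s : ℤ, ⁅x ^ s, y⁆ = ⁅x, y⁆ ^ s := by
  intro s
  induction s using Int.induction_on with
  | zero => simp
  | succ k ih =>
      have key : ⁅x ^ ((k:ℤ) + 1), y⁆ = x * ⁅x ^ (k:ℤ), y⁆ * x⁻¹ * ⁅x, y⁆ := by
        simp only [commutatorElement_def]
        group
      rw [key, ih]
      have h1 : x * ⁅x, y⁆ ^ (k:ℤ) * x⁻¹ = ⁅x, y⁆ ^ (k:ℤ) := by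
        have := ((hc x).symm.zpow_right (k:ℤ)).eq
        -- Commute x (⁅x,y⁆ ^ k)
        rw [this]; group
      rw [h1, ← zpow_add_one]
  | pred k ih =>
      have key : ⁅x ^ (-(k:ℤ) - 1), y⁆ = x⁻¹ * ⁅x ^ (-(k:ℤ)), y⁆ * x * ⁅x⁻¹, y⁆ := by
        simp only [commutatorElement_def]
        group
      have hinv : ⁅x⁻¹, y⁆ = ⁅x, y⁆⁻¹ := by
        have : ⁅x⁻¹, y⁆ = x⁻¹ * ⁅x, y⁆⁻¹ * x := by
          simp only [commutatorElement_def]; group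
        rw [this, mul_assoc, ((hc x).inv_left).eq]; group
      rw [key, ih, hinv]
      have h1 : x⁻¹ * ⁅x, y⁆ ^ (-(k:ℤ)) * x = ⁅x, y⁆ ^ (-(k:ℤ)) := by
        have := ((hc x⁻¹).symm.zpow_right (-(k:ℤ))).eq
        rw [this]; group
      rw [h1, ← zpow_sub_one]

lemma comm_zpow_right (x y : Γ) (hc : ∀ w : Γ, Commute ⁅x, y⁆ w) :
    ∀ s : ℤ, ⁅x, y ^ s⁆ = ⁅x, y⁆ ^ s := by
  intro s
  have hc' : ∀ w : Γ, Commute ⁅y, x⁆ w := by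
    intro w
    rw [← commutatorElement_inv]
    exact (hc w).inv_left
  have h := comm_zpow_left y x hc' s
  calc ⁅x, y ^ s⁆ = ⁅y ^ s, x⁆⁻¹ := by rw [commutatorElement_inv]
    _ = (⁅y, x⁆ ^ s)⁻¹ := by rw [h]
    _ = (⁅y, x⁆⁻¹) ^ s := by rw [inv_zpow]
    _ = ⁅x, y⁆ ^ s := by rw [commutatorElement_inv]

lemma WLemma (h : ℤ → Γ) (m1 n1 : ℤ) (hg : Int.gcd m1 n1 = 1)
    (H0 : h 0 = 1) (Hf : ∀ k : ℤ, h (k + 1) ^ m1 = h k ^ n1)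
    (Hb : ∀ k : ℤ, h (k + 1) ^ n1 = h k ^ m1) : ∀ k, h k = 1 := by
  intro k
  induction k using Int.induction_on with
  | zero => exact H0
  | succ k ih =>
      refine zpow_kill _ m1 n1 ?_ ?_ hg
      · rw [Hf, ih, one_zpow]
      · rw [Hb, ih, one_zpow]
  | pred k ih =>
      refine zpow_kill _ n1 m1 ?_ ?_ (by rwa [Int.gcd_comm])
      · have := Hf (-(k:ℤ) - 1)
        rw [sub_add_cancel, ih, one_zpow] at this
        exact this.symm
      · have := Hb (-(k:ℤ) - 1)
        rw [sub_add_cancel, ih, one_zpow] at this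
        exact this.symm

lemma SeqLemma (h : ℤ → Γ) (m1 n1 : ℤ) (p μ d : ℕ) (hp : p.Prime) (hμ : 1 ≤ μ)
    (hdp : d = p ^ μ) (hg : Int.gcd m1 n1 = 1)
    (H0 : h 0 = 1) (Hrec : ∀ k : ℤ, h (k + 1) ^ m1 = h k ^ n1)
    (Htor : ∀ k : ℤ, h k ^ (d : ℤ) = 1) : ∀ k, h k = 1 := by
  have Pf : ∀ (s : ℕ) (j : ℤ), h j ^ (m1 ^ s) = h (j - s) ^ (n1 ^ s) := by
    intro s
    induction s with
    | zero => intro j; simp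
    | succ s ih =>
        intro j
        calc h j ^ (m1 ^ (s + 1)) = (h j ^ (m1 ^ s)) ^ m1 := by rw [← zpow_mul, pow_succ]
          _ = (h (j - s) ^ (n1 ^ s)) ^ m1 := by rw [ih j]
          _ = (h (j - s) ^ m1) ^ (n1 ^ s) := by rw [← zpow_mul, mul_comm, zpow_mul]
          _ = (h (j - s - 1) ^ n1) ^ (n1 ^ s) := by
              have := Hrec (j - s - 1)
              rw [sub_add_cancel] at this
              rw [this]
          _ = h (j - (s:ℤ) - 1) ^ (n1 ^ (s + 1)) := by
              rw [← zpow_mul, ← pow_succ']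
          _ = h (j - (s + 1 : ℕ)) ^ (n1 ^ (s + 1)) := by
              congr 1
              push_cast; ring
  -- coprimality helper
  have cop : ∀ z : ℤ, ¬ (p : ℤ) ∣ z → ∀ s : ℕ, Int.gcd (z ^ s) (d : ℤ) = 1 := by
    intro z hz s
    have h1 : Nat.Coprime z.natAbs p := by
      have : ¬ p ∣ z.natAbs := by
        intro hc
        exact hz (dvd_trans (Int.natCast_dvd_natCast.mpr hc) (Int.natAbs_dvd.mpr dvd_rfl))
      exact ((Nat.Prime.coprime_iff_not_dvd hp).mpr this).symm
    have : Nat.Coprime (z.natAbs ^ s) (p ^ μ) := Nat.Coprime.pow s μ h1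
    unfold Int.gcd
    rw [Int.natAbs_pow, Int.natAbs_natCast, hdp]
    exact this
  have kill : ∀ (x : Γ) (z : ℤ), ¬ (p:ℤ) ∣ z → ∀ s : ℕ, x ^ (z ^ s) = 1 → x ^ (d:ℤ) = 1 → x = 1 := by
    intro x z hz s h1 h2
    exact zpow_kill x _ _ h1 h2 (cop z hz s)
  have hpm_or : ¬ ((p:ℤ) ∣ m1 ∧ (p:ℤ) ∣ n1) := by
    rintro ⟨h1, h2⟩
    have : (p:ℤ) ∣ (Int.gcd m1 n1 : ℤ) := Int.dvd_coe_gcd h1 h2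
    rw [hg] at this
    have := Int.le_of_dvd (by norm_num) this
    have := hp.two_le
    omega
  have hdvdpow : ∀ z : ℤ, (p:ℤ) ∣ z → ∀ (x : Γ), x ^ (d:ℤ) = 1 → x ^ (z ^ μ) = 1 := by
    intro z hzp x hx
    have : (d:ℤ) ∣ z ^ μ := by
      have h2 : (p:ℤ) ^ μ ∣ z ^ μ := pow_dvd_pow_of_dvd hzp μ
      rwa [show ((d:ℕ):ℤ) = (p:ℤ)^μ by rw [hdp]; push_cast; ring]
    obtain ⟨q, hq⟩ := this
    rw [hq, zpow_mul, hx, one_zpow]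
  intro k
  by_cases hpm : (p:ℤ) ∣ m1
  · -- p ∣ m1, so ¬ p ∣ n1
    have hpn : ¬ (p:ℤ) ∣ n1 := fun hc => hpm_or ⟨hpm, hc⟩
    -- h k ^ (n1 ^ μ) = h (k+μ) ^ (m1 ^ μ) = 1
    have e1 : h (k + μ) ^ (m1 ^ μ) = h k ^ (n1 ^ μ) := by
      have := Pf μ (k + μ)
      rwa [add_sub_cancel_right] at this
    have e2 : h (k + μ) ^ (m1 ^ μ) = 1 := hdvdpow m1 hpm _ (Htor _)
    exact kill _ n1 hpn μ (by rw [← e1, e2]) (Htor k)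
  · by_cases hpn : (p:ℤ) ∣ n1
    · -- h k ^ (m1^μ) = h (k - μ) ^ (n1^μ) = 1
      have e1 : h k ^ (m1 ^ μ) = 1 := by
        rw [Pf μ k]
        exact hdvdpow n1 hpn _ (Htor _)
      exact kill _ m1 hpm μ e1 (Htor k)
    · -- both coprime to p
      rcases le_or_gt 0 k with hk | hk
      · have e1 : h k ^ (m1 ^ k.toNat) = 1 := by
          rw [Pf k.toNat k, show k - (k.toNat : ℤ) = 0 by omega, H0, one_zpow]
        exact kill _ m1 hpm k.toNat e1 (Htor k)
      · have e1 : h k ^ (n1 ^ (-k).toNat) = 1 := by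
          have := Pf (-k).toNat 0
          rw [H0, one_zpow, show (0:ℤ) - ((-k).toNat : ℤ) = k by omega] at this
          exact this.symm
        exact kill _ n1 hpn (-k).toNat e1 (Htor k)

instance lcsOmega_normal {G : Type*} [Group G] : (lcsOmega G).Normal := by
  constructor
  intro x hx g
  rw [lcsOmega, Subgroup.mem_iInf] at hx ⊢
  intro c
  exact Subgroup.Normal.conj_mem inferInstance x (hx c) g


lemma conj_zpow' (g b : Γ) (s : ℤ) : (g⁻¹ * b * g) ^ s = g⁻¹ * b ^ s * g := by
  have := conj_zpow (i := s) (a := g⁻¹) (b := b)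
  simpa using this

/-- the sequence of conjugates -/

def aseq (t a : Γ) (j : ℤ) : Γ := t ^ (-j) * a * t ^ j

lemma aseq_zero (t a : Γ) : aseq t a 0 = a := by simp [aseq]

lemma aseq_conj (t a : Γ) (j s : ℤ) : (t ^ s)⁻¹ * aseq t a j * t ^ s = aseq t a (j + s) := by
  simp only [aseq]
  rw [show t ^ (-(j+s)) = (t^s)⁻¹ * t^(-j) by rw [← zpow_neg]; rw [← zpow_add]; congr 1; ring,
      show t ^ (j+s) = t^j * t^s by rw [← zpow_add]]
  group

lemma aseq_succ (t a : Γ) (j : ℤ) : t⁻¹ * aseq t a j * t = aseq t a (j + 1) := by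
  have := aseq_conj t a j 1
  simpa using this

lemma aseq_zpow (t a : Γ) (j s : ℤ) : (aseq t a j) ^ s = t ^ (-j) * a ^ s * t ^ j := by
  simp only [aseq]
  rw [show t ^ (-j) = (t ^ j)⁻¹ by rw [zpow_neg]] 
  exact conj_zpow' _ _ _

lemma aseq_rel (t a : Γ) (m n : ℤ) (rel : t⁻¹ * a ^ m * t = a ^ n) (j : ℤ) :
    (aseq t a (j + 1)) ^ m = (aseq t a j) ^ n := by
  rw [aseq_zpow, aseq_zpow, ← rel]
  rw [show (-(j+1) : ℤ) = -j + -1 by ring]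
  rw [zpow_add, zpow_add]
  group

lemma aseq_finOrder (t a : Γ) (E : ℤ) (hE : E ≠ 0) (ha : a ^ E = 1) (j : ℤ) :
    IsOfFinOrder (aseq t a j) := by
  rw [isOfFinOrder_iff_pow_eq_one]
  refine ⟨E.natAbs, by omega, ?_⟩
  have h1 : (aseq t a j) ^ (E.natAbs : ℤ) = t ^ (-j) * a ^ (E.natAbs : ℤ) * t ^ j := aseq_zpow ..
  have h2 : a ^ (E.natAbs : ℤ) = 1 := by
    rcases Int.natAbs_eq E with h | h
    · rw [← h, ha]
    · rw [show ((E.natAbs : ℤ)) = -E by omega, zpow_neg, ha, inv_one]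
  rw [← zpow_natCast, h1, h2]
  group

lemma bs_chain (t a : Γ) (m n : ℤ) (hm : m ≠ 0) (hn : n ≠ 0)
    (rel : t⁻¹ * a ^ m * t = a ^ n) (E : ℤ) (hE : E ≠ 0) (ha : a ^ E = 1)
    (d : ℕ) (hd : (d : ℤ) = Int.gcd m n) :
    ∀ i : ℤ, Subgroup.zpowers ((aseq t a i) ^ (d:ℤ)) = Subgroup.zpowers (a ^ (d:ℤ)) := by
  have step : ∀ i : ℤ, Subgroup.zpowers ((aseq t a (i+1)) ^ (d:ℤ))
      = Subgroup.zpowers ((aseq t a i) ^ (d:ℤ)) := by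
    intro i
    have h := KL (aseq t a i) t (aseq_finOrder t a E hE ha i) m n hm hn ?_ d hd
    · rw [show t⁻¹ * aseq t a i * t = aseq t a (i+1) from aseq_succ t a i] at h
      exact h
    · rw [show t⁻¹ * aseq t a i * t = aseq t a (i+1) from aseq_succ t a i]
      exact aseq_rel t a m n rel i
  intro i
  induction i using Int.induction_on with
  | zero => rw [aseq_zero]
  | succ k ih => rw [step, ih]
  | pred k ih => rw [← ih, ← step (-(k:ℤ) - 1), sub_add_cancel]

lemma bs_commute (t a : Γ) (m n : ℤ) (hm : m ≠ 0) (hn : n ≠ 0)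
    (rel : t⁻¹ * a ^ m * t = a ^ n) (E : ℤ) (hE : E ≠ 0) (ha : a ^ E = 1)
    (d : ℕ) (hd : (d : ℤ) = Int.gcd m n) (i j : ℤ) :
    Commute ((aseq t a i) ^ (d:ℤ)) (aseq t a j) ∧
    Commute (aseq t a i) ((aseq t a j) ^ (d:ℤ)) ∧
    Commute ((aseq t a i) ^ (d:ℤ)) ((aseq t a j) ^ (d:ℤ)) := by
  have hc := bs_chain t a m n hm hn rel E hE ha d hd
  have hmem : ∀ i j : ℤ, ∃ s : ℤ, ((aseq t a j) ^ (d:ℤ)) ^ s = (aseq t a i) ^ (d:ℤ) := by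
    intro i j
    have : (aseq t a i) ^ (d:ℤ) ∈ Subgroup.zpowers ((aseq t a j) ^ (d:ℤ)) := by
      rw [hc j, ← hc i]
      exact Subgroup.mem_zpowers _
    exact Subgroup.mem_zpowers_iff.mp this
  obtain ⟨s, hs⟩ := hmem i j
  have c1 : Commute ((aseq t a i) ^ (d:ℤ)) (aseq t a j) := by
    rw [← hs, ← zpow_mul]
    exact ((Commute.refl (aseq t a j)).zpow_right _).symm
  refine ⟨c1, ?_, c1.zpow_right _⟩
  obtain ⟨s', hs'⟩ := hmem j i
  rw [← hs', ← zpow_mul]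
  exact (Commute.refl (aseq t a i)).zpow_right _

lemma bs_torsion (t a : Γ) (m n : ℤ) (rel : t⁻¹ * a ^ m * t = a ^ n) (c : ℕ) :
    a ^ ((n - m) ^ c) ∈ (⊤ : Subgroup Γ).lowerCentralSeries c := by
  induction c with
  | zero => rw [Subgroup.lowerCentralSeries_zero]; exact Subgroup.mem_top _
  | succ c ih =>
      set x := a ^ ((n - m) ^ c) with hx
      have key : a ^ ((n - m) ^ (c+1)) = ⁅x ^ (-m), t⁻¹⁆ := by
        have hconj : t⁻¹ * x ^ m * t = x ^ n := by
          rw [hx, ← zpow_mul, ← zpow_mul, mul_comm, zpow_mul, mul_comm, zpow_mul, ← rel]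
          have := conj_zpow (i := (n-m)^c) (a := t⁻¹) (b := a ^ m)
          simpa using this.symm
        have : a ^ ((n-m)^(c+1)) = x ^ (n - m) := by
          rw [hx, ← zpow_mul, ← pow_succ]
        rw [this, commutatorElement_def]
        rw [show x ^ (n - m) = x ^ (-m) * x ^ n by rw [← zpow_add]; congr 1; ring]
        rw [← hconj]
        group
      rw [key, Subgroup.lowerCentralSeries_succ]
      exact Subgroup.commutator_mem_commutator (Subgroup.zpow_mem _ ih _) (Subgroup.mem_top _)

lemma bs_mem_lcsOmega (t a : Γ) (m n : ℤ) (hm : m ≠ 0) (hn : n ≠ 0) (hmn : m ≠ n)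
    (rel : t⁻¹ * a ^ m * t = a ^ n)
    (d : ℕ) (hd : (d : ℤ) = Int.gcd m n) (i j : ℤ) :
    ⁅(aseq t a i) ^ (d:ℤ), aseq t a j⁆ ∈ lcsOmega Γ ∧
    ⁅aseq t a i, (aseq t a j) ^ (d:ℤ)⁆ ∈ lcsOmega Γ ∧
    ⁅(aseq t a i) ^ (d:ℤ), (aseq t a j) ^ (d:ℤ)⁆ ∈ lcsOmega Γ := by
  have main : ∀ c : ℕ,
      ⁅(aseq t a i) ^ (d:ℤ), aseq t a j⁆ ∈ (⊤ : Subgroup Γ).lowerCentralSeries c ∧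
      ⁅aseq t a i, (aseq t a j) ^ (d:ℤ)⁆ ∈ (⊤ : Subgroup Γ).lowerCentralSeries c ∧
      ⁅(aseq t a i) ^ (d:ℤ), (aseq t a j) ^ (d:ℤ)⁆ ∈ (⊤ : Subgroup Γ).lowerCentralSeries c := by
    intro c
    set N := (⊤ : Subgroup Γ).lowerCentralSeries c with hN
    let π : Γ →* Γ ⧸ N := QuotientGroup.mk' N
    have haseq : ∀ (u : ℤ), π (aseq t a u) = aseq (π t) (π a) u := by
      intro u
      simp only [aseq, map_mul, map_zpow]
    have hrel' : (π t)⁻¹ * (π a) ^ m * (π t) = (π a) ^ n := by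
      have := congrArg π rel
      simpa [map_mul, map_zpow, map_inv] using this
    have hator : (π a) ^ ((n - m) ^ c) = 1 := by
      have h1 : π (a ^ ((n-m)^c)) = 1 := by
        rw [QuotientGroup.mk'_apply, QuotientGroup.eq_one_iff]
        exact bs_torsion t a m n rel c
      rw [map_zpow] at h1
      exact h1
    have hE : (n - m) ^ c ≠ 0 := pow_ne_zero _ (sub_ne_zero.mpr (fun h => hmn h.symm))
    have hcom := bs_commute (π t) (π a) m n hm hn hrel' _ hE hator d hd i j
    refine ⟨?_, ?_, ?_⟩
    · rw [← QuotientGroup.eq_one_iff (N := N), ← QuotientGroup.mk'_apply,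
        show QuotientGroup.mk' N = π from rfl, map_commutatorElement, map_zpow, haseq, haseq]
      exact commutatorElement_eq_one_iff_commute.mpr hcom.1
    · rw [← QuotientGroup.eq_one_iff (N := N), ← QuotientGroup.mk'_apply,
        show QuotientGroup.mk' N = π from rfl, map_commutatorElement, map_zpow, haseq, haseq]
      exact commutatorElement_eq_one_iff_commute.mpr hcom.2.1
    · rw [← QuotientGroup.eq_one_iff (N := N), ← QuotientGroup.mk'_apply,
        show QuotientGroup.mk' N = π from rfl, map_commutatorElement, map_zpow, map_zpow, haseq, haseq]
      exact commutatorElement_eq_one_iff_commute.mpr hcom.2.2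
  rw [lcsOmega]
  refine ⟨Subgroup.mem_iInf.mpr (fun c => (main c).1), Subgroup.mem_iInf.mpr (fun c => (main c).2.1),
    Subgroup.mem_iInf.mpr (fun c => (main c).2.2)⟩

lemma commElt_mem_of_commute {N : Subgroup Γ} [N.Normal] (x y : Γ)
    (h : Commute ((QuotientGroup.mk' N) x) ((QuotientGroup.mk' N) y)) :
    commElt x y ∈ N := by
  rw [← QuotientGroup.eq_one_iff (N := N) (commElt x y)]
  have : ((commElt x y : Γ) : Γ ⧸ N) = (QuotientGroup.mk' N) (commElt x y) := rfl
  rw [this]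
  set π := QuotientGroup.mk' N
  have hexp : π (commElt x y) = (π x)⁻¹ * (π y)⁻¹ * (π x) * (π y) := by
    simp [commElt, map_mul, map_inv]
  rw [hexp, (h.inv_inv).eq]
  group

lemma commElt_eq_one_of_commute (x y : Γ) (h : Commute x y) : commElt x y = 1 := by
  rw [commElt, (h.inv_inv).eq]; group

theorem main_abstract (t a : Γ) (m n : ℤ) (hm0 : 0 < m) (hn : n ≠ 0)
    (rel : t⁻¹ * a ^ m * t = a ^ n)
    (d p μ : ℕ) (hd : (d:ℤ) = Int.gcd m n) (hp : p.Prime) (hμ : 1 ≤ μ) (hdp : d = p ^ μ)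
    (k : ℤ) :
    commElt ((aseq t a k) ^ (d:ℤ)) a ∈ ⁅lcsOmega Γ, (⊤ : Subgroup Γ)⁆ ∧
    commElt (aseq t a k) (a ^ (d:ℤ)) ∈ ⁅lcsOmega Γ, (⊤ : Subgroup Γ)⁆ := by
  have hm : m ≠ 0 := hm0.ne'
  by_cases hmn : m = n
  · -- easy case
    have hdm : (d : ℤ) = m := by
      rw [hd, ← hmn, Int.gcd_self]
      simp [Int.natAbs_of_nonneg hm0.le]
    have hcomm_t : Commute (a ^ (d:ℤ)) t := by
      rw [hdm]
      have : a ^ m * t = t * a ^ n := by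
        rw [← rel]; group
      rw [Commute, SemiconjBy, this, hmn]
    have hconj : t ^ (-k) * a ^ (d:ℤ) * t ^ k = a ^ (d:ℤ) := by
      rw [zpow_neg, mul_assoc, (hcomm_t.zpow_right k).eq, inv_mul_cancel_left]
    constructor
    · have h1 : (aseq t a k) ^ (d:ℤ) = a ^ (d:ℤ) := by rw [aseq_zpow, hconj]
      rw [h1, commElt_eq_one_of_commute _ _ ((Commute.refl a).zpow_left (d:ℤ))]
      exact Subgroup.one_mem _
    · have h2 : a ^ (d:ℤ) = (aseq t a k) ^ (d:ℤ) := by rw [aseq_zpow, hconj]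
      rw [h2, commElt_eq_one_of_commute _ _ ((Commute.refl (aseq t a k)).zpow_right (d:ℤ))]
      exact Subgroup.one_mem _
  · -- main case
    have hd0 : 0 < d := by
      have := hp.two_le
      rw [hdp]; positivity
    have hdm : (d:ℤ) ∣ m := hd ▸ Int.gcd_dvd_left m n
    have hdn : (d:ℤ) ∣ n := hd ▸ Int.gcd_dvd_right m n
    set m1 := m / (d:ℤ) with hm1
    set n1 := n / (d:ℤ) with hn1
    have hmd : (d:ℤ) * m1 = m := Int.mul_ediv_cancel' hdm
    have hnd : (d:ℤ) * n1 = n := Int.mul_ediv_cancel' hdn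
    have hgcd1 : Int.gcd m1 n1 = 1 := by
      have h0 : 0 < Int.gcd m n := by
        have : d = Int.gcd m n := by exact_mod_cast hd
        omega
      have := Int.gcd_div_gcd_div_gcd (i := m) (j := n) h0
      rw [hm1, hn1, hd]
      exact_mod_cast this
    set H := ⁅lcsOmega Γ, (⊤ : Subgroup Γ)⁆ with hH
    have : H.Normal := Subgroup.commutator_normal _ _
    let π : Γ →* Γ ⧸ H := QuotientGroup.mk' H
    let α : ℤ → Γ ⧸ H := fun j => π (aseq t a j)
    let τ : Γ ⧸ H := π t
    have hcent : ∀ x : Γ, x ∈ lcsOmega Γ → ∀ w : Γ ⧸ H, Commute (π x) w := by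
      intro x hx w
      induction w using QuotientGroup.induction_on with
      | H g =>
        rw [← commutatorElement_eq_one_iff_commute]
        have : (QuotientGroup.mk g : Γ ⧸ H) = π g := rfl
        rw [this, ← map_commutatorElement]
        rw [QuotientGroup.mk'_apply, QuotientGroup.eq_one_iff]
        exact Subgroup.commutator_mem_commutator hx (Subgroup.mem_top _)
    have Ω := fun i j => bs_mem_lcsOmega t a m n hm hn hmn rel d hd i j
    -- quotient relation
    have hαrel : ∀ j : ℤ, α (j+1) ^ m = α j ^ n := by
      intro j
      have := congrArg π (aseq_rel t a m n rel j)
      simpa only [map_zpow] using this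
    have hαconj : ∀ j : ℤ, τ⁻¹ * α j * τ = α (j + 1) := by
      intro j
      have := congrArg π (aseq_succ t a j)
      simpa only [map_mul, map_inv] using this
    have hαshift : ∀ j s : ℤ, (τ ^ s)⁻¹ * α j * τ ^ s = α (j + s) := by
      intro j s
      have := congrArg π (aseq_conj t a j s)
      simpa only [map_mul, map_inv, map_zpow] using this
    -- u and its centrality
    set u : ℤ → Γ ⧸ H := fun j => ⁅α j ^ (d:ℤ), α 0⁆ with hu
    have hu_pi : ∀ j, u j = π ⁅(aseq t a j) ^ (d:ℤ), aseq t a 0⁆ := by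
      intro j
      rw [map_commutatorElement, map_zpow]
    have hu_cent : ∀ j, ∀ w, Commute (u j) w := by
      intro j w
      rw [hu_pi]
      exact hcent _ (Ω j 0).1 w
    set W : ℤ → Γ ⧸ H := fun j => ⁅α j ^ (d:ℤ), α 0 ^ (d:ℤ)⁆ with hW
    have hW_pi : ∀ j, W j = π ⁅(aseq t a j) ^ (d:ℤ), (aseq t a 0) ^ (d:ℤ)⁆ := by
      intro j
      rw [map_commutatorElement, map_zpow, map_zpow]
    have hW_cent : ∀ j, ∀ w, Commute (W j) w := by
      intro j w
      rw [hW_pi]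
      exact hcent _ (Ω j 0).2.2 w
    -- u recurrence
    have hurec : ∀ j : ℤ, u (j+1) ^ m1 = u j ^ n1 := by
      intro j
      have e1 : u (j+1) ^ m1 = ⁅(α (j+1) ^ (d:ℤ)) ^ m1, α 0⁆ :=
        (comm_zpow_left _ _ (hu_cent (j+1)) m1).symm
      have e2 : (α (j+1) ^ (d:ℤ)) ^ m1 = (α j ^ (d:ℤ)) ^ n1 := by
        rw [← zpow_mul, ← zpow_mul, hmd, hnd, hαrel]
      rw [e1, e2]
      exact comm_zpow_left _ _ (hu_cent j) n1
    -- u j ^ d = W j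
    have hud : ∀ j : ℤ, u j ^ (d:ℤ) = W j := by
      intro j
      exact (comm_zpow_right _ _ (hu_cent j) (d:ℤ)).symm
    -- W forward recurrence
    have hWf : ∀ j : ℤ, W (j+1) ^ m1 = W j ^ n1 := by
      intro j
      rw [← hud, ← hud, ← zpow_mul, mul_comm, zpow_mul, hurec, ← zpow_mul, mul_comm, zpow_mul]
    -- W backward recurrence
    have hWb : ∀ j : ℤ, W (j+1) ^ n1 = W j ^ m1 := by
      intro j
      -- Z j = ⁅α (j+1) ^ d, α 1 ^ d⁆ is central
      have hZ_cent : ∀ w, Commute (⁅α (j+1) ^ (d:ℤ), α 1 ^ (d:ℤ)⁆) w := by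
        intro w
        have : ⁅α (j+1) ^ (d:ℤ), α 1 ^ (d:ℤ)⁆
            = π ⁅(aseq t a (j+1)) ^ (d:ℤ), (aseq t a 1) ^ (d:ℤ)⁆ := by
          rw [map_commutatorElement, map_zpow, map_zpow]
        rw [this]
        exact hcent _ (Ω (j+1) 1).2.2 w
      have e1 : W (j+1) ^ n1 = ⁅α (j+1) ^ (d:ℤ), (α 0 ^ (d:ℤ)) ^ n1⁆ :=
        (comm_zpow_right _ _ (hW_cent (j+1)) n1).symm
      have e2 : (α 0 ^ (d:ℤ)) ^ n1 = (α 1 ^ (d:ℤ)) ^ m1 := by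
        rw [← zpow_mul, ← zpow_mul, hmd, hnd]
        have h01 := hαrel 0
        rw [zero_add] at h01
        rw [← h01]
      have e3 : ⁅α (j+1) ^ (d:ℤ), (α 1 ^ (d:ℤ)) ^ m1⁆ = ⁅α (j+1) ^ (d:ℤ), α 1 ^ (d:ℤ)⁆ ^ m1 :=
        comm_zpow_right _ _ hZ_cent m1
      have e4 : ⁅α (j+1) ^ (d:ℤ), α 1 ^ (d:ℤ)⁆ = W j := by
        have conj_id : τ⁻¹ * ⁅α j ^ (d:ℤ), α 0 ^ (d:ℤ)⁆ * τ
            = ⁅τ⁻¹ * α j ^ (d:ℤ) * τ, τ⁻¹ * α 0 ^ (d:ℤ) * τ⁆ := by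
          simp only [commutatorElement_def]
          group
        have conj_pow : ∀ j' : ℤ, τ⁻¹ * α j' ^ (d:ℤ) * τ = α (j' + 1) ^ (d:ℤ) := by
          intro j'
          have : τ⁻¹ * α j' ^ (d:ℤ) * τ = (τ⁻¹ * α j' * τ) ^ (d:ℤ) := by
            have := conj_zpow (i := (d:ℤ)) (a := τ⁻¹) (b := α j')
            simpa using this.symm
          rw [this, hαconj]
        have central : τ⁻¹ * W j * τ = W j := by
          rw [mul_assoc, (hW_cent j τ).eq, ← mul_assoc, inv_mul_cancel, one_mul]
        calc ⁅α (j+1) ^ (d:ℤ), α 1 ^ (d:ℤ)⁆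
            = ⁅τ⁻¹ * α j ^ (d:ℤ) * τ, τ⁻¹ * α 0 ^ (d:ℤ) * τ⁆ := by
              rw [conj_pow j, conj_pow 0]
              norm_num
          _ = τ⁻¹ * W j * τ := by rw [← conj_id]
          _ = W j := central
      rw [e1, e2, e3, e4]
    have hW0 : W 0 = 1 := commutatorElement_self _
    have hWall : ∀ j, W j = 1 := WLemma W m1 n1 hgcd1 hW0 hWf hWb
    have hu0 : u 0 = 1 :=
      commutatorElement_eq_one_iff_commute.mpr ((Commute.refl (α 0)).zpow_left (d:ℤ))
    have hutor : ∀ j : ℤ, u j ^ (d:ℤ) = 1 := fun j => by rw [hud, hWall]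
    have huall : ∀ j, u j = 1 := SeqLemma u m1 n1 p μ d hp hμ hdp hgcd1 hu0 hurec hutor
    -- v
    have hvall : ∀ j : ℤ, ⁅α j, α 0 ^ (d:ℤ)⁆ = 1 := by
      intro j
      have h1 : (τ ^ j)⁻¹ * u (-j) * τ ^ j = ⁅α 0 ^ (d:ℤ), α j⁆ := by
        have conj_id : (τ ^ j)⁻¹ * ⁅α (-j) ^ (d:ℤ), α 0⁆ * τ ^ j
            = ⁅(τ ^ j)⁻¹ * α (-j) ^ (d:ℤ) * τ ^ j, (τ ^ j)⁻¹ * α 0 * τ ^ j⁆ := by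
          simp only [commutatorElement_def]
          group
        have conj_pow : (τ ^ j)⁻¹ * α (-j) ^ (d:ℤ) * τ ^ j = α 0 ^ (d:ℤ) := by
          have h2 : (τ ^ j)⁻¹ * α (-j) ^ (d:ℤ) * τ ^ j = ((τ ^ j)⁻¹ * α (-j) * τ ^ j) ^ (d:ℤ) := by
            have := conj_zpow (i := (d:ℤ)) (a := (τ ^ j)⁻¹) (b := α (-j))
            simpa using this.symm
          rw [h2, hαshift]
          norm_num
        rw [hu, conj_id, conj_pow, hαshift]
        norm_num
      have h2 : (τ ^ j)⁻¹ * u (-j) * τ ^ j = u (-j) := by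
        rw [mul_assoc, (hu_cent (-j) (τ ^ j)).eq, ← mul_assoc, inv_mul_cancel, one_mul]
      have h3 : ⁅α 0 ^ (d:ℤ), α j⁆ = 1 := by rw [← h1, h2, huall]
      calc ⁅α j, α 0 ^ (d:ℤ)⁆ = ⁅α 0 ^ (d:ℤ), α j⁆⁻¹ := (commutatorElement_inv _ _).symm
        _ = 1 := by rw [h3, inv_one]
    have hA0 : α 0 = π a := by
      show π (aseq t a 0) = π a
      rw [aseq_zero]
    constructor
    · apply commElt_mem_of_commute
      have hco : Commute (α k ^ (d:ℤ)) (π a) := by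
        rw [← hA0]
        exact commutatorElement_eq_one_iff_commute.mp (huall k)
      show Commute ((QuotientGroup.mk' H) ((aseq t a k) ^ (d:ℤ))) ((QuotientGroup.mk' H) a)
      rw [map_zpow]
      exact hco
    · apply commElt_mem_of_commute
      have hco : Commute (α k) ((π a) ^ (d:ℤ)) := by
        rw [← hA0]
        exact commutatorElement_eq_one_iff_commute.mp (hvall k)
      show Commute ((QuotientGroup.mk' H) (aseq t a k)) ((QuotientGroup.mk' H) (a ^ (d:ℤ)))
      rw [map_zpow]
      exact hco

end Auxiliary

theorem stmt15 (m n : ℤ) (hm : 0 < m) (hmn : m ≤ |n|) (d : ℕ) (hd : (d : ℤ) = Int.gcd m n)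
    (p μ : ℕ) (hp : p.Prime) (hμ : 1 ≤ μ) (hdp : d = p ^ μ) (k : ℕ) :
    commElt ((BS.t m n) ^ (-(k : ℤ)) * (BS.a m n) ^ (d : ℤ) * (BS.t m n) ^ (k : ℤ)) (BS.a m n)
        ∈ ⁅lcsOmega (BS m n), (⊤ : Subgroup (BS m n))⁆ ∧
    commElt ((BS.t m n) ^ (-(k : ℤ)) * BS.a m n * (BS.t m n) ^ (k : ℤ)) ((BS.a m n) ^ (d : ℤ))
        ∈ ⁅lcsOmega (BS m n), (⊤ : Subgroup (BS m n))⁆ := by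
  have hn : n ≠ 0 := by
    intro h
    rw [h] at hmn
    simp at hmn
    omega
  have rel : (BS.t m n)⁻¹ * (BS.a m n) ^ m * (BS.t m n) = (BS.a m n) ^ n := by
    have hmemrel : ((FreeGroup.of 0)⁻¹ * (FreeGroup.of 1) ^ m * FreeGroup.of 0
        * ((FreeGroup.of 1) ^ n)⁻¹ : FreeGroup (Fin 2))
        ∈ Subgroup.normalClosure (BSRels m n) := by
      apply Subgroup.subset_normalClosure
      simp [BSRels]
    have key : (PresentedGroup.mk (BSRels m n)) ((FreeGroup.of 0)⁻¹ * (FreeGroup.of 1) ^ m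
        * FreeGroup.of 0 * ((FreeGroup.of 1) ^ n)⁻¹) = 1 := by
      exact (QuotientGroup.eq_one_iff _).mpr hmemrel
    rw [map_mul, map_mul, map_mul, map_inv, map_inv, map_zpow, map_zpow] at key
    have key2 : (BS.t m n)⁻¹ * (BS.a m n) ^ m * (BS.t m n) * ((BS.a m n) ^ n)⁻¹ = 1 := key
    exact mul_inv_eq_one.mp key2
  have main := main_abstract (BS.t m n) (BS.a m n) m n hm hn rel d p μ hd hp hμ hdp (k : ℤ)
  constructor
  · have h1 : (aseq (BS.t m n) (BS.a m n) (k:ℤ)) ^ (d:ℤ)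
        = (BS.t m n) ^ (-(k:ℤ)) * (BS.a m n) ^ (d:ℤ) * (BS.t m n) ^ (k:ℤ) :=
      aseq_zpow _ _ _ _
    rw [← h1]
    exact main.1
  · exact main.2
end

section
/- Let G = BS(m,n) be the Baumslag–Solitar group with 0 < m ≤ |n|, let d = gcd(m,n), and let μ, ν be positive integers with 1 ≤ μ, ν ≤ d, gcd(μ,ν) = 1 and μ·ν = d. Then [t^{-k} a^μ t^k, a^ν] ∈ [γ_ω(G), G] for all k ∈ ℤ. -/
namespace Stmt18

variable {Q : Type*} [Group Q]


variable {Q : Type*} [Group Q]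

lemma commElt_mul_eq (x y : Q) : x * y = y * x * commElt x y := by
  unfold commElt; group

lemma central_zpow {c : Q} (hc : ∀ g : Q, c * g = g * c) (e : ℤ) (g : Q) :
    c ^ e * g = g * c ^ e := by
  have : Commute c g := hc g
  exact (this.zpow_left e).eq

lemma semiconj_zpow (x y c : Q) (h : x * y = y * x * c)
    (hc : ∀ g : Q, c * g = g * c) : ∀ r : ℤ, x ^ r * y = y * x ^ r * c ^ r := by
  have hinv : x⁻¹ * y = y * x⁻¹ * c⁻¹ := by
    have h2 : y = x⁻¹ * (y * x * c) := by rw [← h]; group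
    calc x⁻¹ * y = x⁻¹ * (y * x * c) * c⁻¹ * x⁻¹ * (x * x⁻¹) := by group
    _ = y * c⁻¹ * x⁻¹ * (x * x⁻¹) := by rw [← h2]
    _ = y * (c⁻¹ * x⁻¹) := by group
    _ = y * (x⁻¹ * c⁻¹) := by
        have : Commute c⁻¹ x⁻¹ := (Commute.inv_inv (hc x))
        rw [this.eq]
    _ = y * x⁻¹ * c⁻¹ := by group
  intro r
  induction r using Int.induction_on with
  | zero => simp
  | succ i ih =>
      calc x ^ ((i : ℤ) + 1) * y = x ^ (i:ℤ) * (x * y) := by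
            rw [zpow_add_one]; group
      _ = x ^ (i:ℤ) * (y * x * c) := by rw [h]
      _ = (x ^ (i:ℤ) * y) * x * c := by group
      _ = (y * x ^ (i:ℤ) * c ^ (i:ℤ)) * x * c := by rw [ih]
      _ = y * x ^ (i:ℤ) * (c ^ (i:ℤ) * x) * c := by group
      _ = y * x ^ (i:ℤ) * (x * c ^ (i:ℤ)) * c := by rw [central_zpow hc]
      _ = y * (x ^ (i:ℤ) * x) * (c ^ (i:ℤ) * c) := by group
      _ = y * x ^ ((i:ℤ)+1) * c ^ ((i:ℤ)+1) := by rw [← zpow_add_one, ← zpow_add_one]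
  | pred i ih =>
      calc x ^ (-(i : ℤ) - 1) * y = x ^ (-(i:ℤ)) * (x⁻¹ * y) := by
            rw [zpow_sub_one]; group
      _ = x ^ (-(i:ℤ)) * (y * x⁻¹ * c⁻¹) := by rw [hinv]
      _ = (x ^ (-(i:ℤ)) * y) * x⁻¹ * c⁻¹ := by group
      _ = (y * x ^ (-(i:ℤ)) * c ^ (-(i:ℤ))) * x⁻¹ * c⁻¹ := by rw [ih]
      _ = y * x ^ (-(i:ℤ)) * (c ^ (-(i:ℤ)) * x⁻¹) * c⁻¹ := by group
      _ = y * x ^ (-(i:ℤ)) * (x⁻¹ * c ^ (-(i:ℤ))) * c⁻¹ := by rw [central_zpow hc]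
      _ = y * (x ^ (-(i:ℤ)) * x⁻¹) * (c ^ (-(i:ℤ)) * c⁻¹) := by group
      _ = y * x ^ (-(i:ℤ)-1) * c ^ (-(i:ℤ)-1) := by rw [← zpow_sub_one, ← zpow_sub_one]

lemma zpow_zpow_comm (x y c : Q) (h : x * y = y * x * c)
    (hc : ∀ g : Q, c * g = g * c) (r w : ℤ) :
    x ^ r * y ^ w = y ^ w * x ^ r * c ^ (r * w) := by
  have h1 := semiconj_zpow x y c h hc r
  have h2 : y * x ^ r = x ^ r * y * (c ^ r)⁻¹ := by rw [h1]; group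
  have hc2 : ∀ g : Q, (c ^ r)⁻¹ * g = g * (c ^ r)⁻¹ := by
    intro g
    have hcg : Commute c g := hc g
    exact ((hcg.zpow_left r).inv_left).eq
  have h3 := semiconj_zpow y (x ^ r) ((c ^ r)⁻¹) h2 hc2 w
  have h4 : ((c ^ r)⁻¹) ^ w = (c ^ (r * w))⁻¹ := by rw [inv_zpow, ← zpow_mul]
  rw [h4] at h3
  rw [h3]; group

lemma commElt_zpow (x y : Q) (hc : ∀ g : Q, commElt x y * g = g * commElt x y)
    (r w : ℤ) : commElt (x ^ r) (y ^ w) = commElt x y ^ (r * w) := by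
  have h := zpow_zpow_comm x y (commElt x y) (commElt_mul_eq x y) hc r w
  have h5 : commElt (x ^ r) (y ^ w) = (x^r)⁻¹ * (y^w)⁻¹ * (x^r * y^w) := by
    unfold commElt; group
  rw [h5, h]; group



variable {Q : Type*} [Group Q]

lemma zpow_eq_one_of_dvd {z : Q} {A B : ℤ} (h : z ^ A = 1) (hAB : A ∣ B) :
    z ^ B = 1 := by
  obtain ⟨c, rfl⟩ := hAB
  rw [zpow_mul, h, one_zpow]

lemma bezout_combine {z : Q} {x y E : ℤ} (hxy : IsCoprime x y)
    (h1 : z ^ (x * E) = 1) (h2 : z ^ (y * E) = 1) : z ^ E = 1 := by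
  obtain ⟨a, b, hab⟩ := hxy
  have hE : E = (x * E) * a + (y * E) * b := by linear_combination E * hab.symm
  calc z ^ E = z ^ ((x * E) * a + (y * E) * b) := by rw [← hE]
  _ = (z ^ (x * E)) ^ a * (z ^ (y * E)) ^ b := by
      rw [zpow_add, zpow_mul z (x * E) a, zpow_mul z (y * E) b]
  _ = 1 := by rw [h1, h2, one_zpow, one_zpow, one_mul]

lemma assemble {x : Q} {Da : ℕ} (hDa0 : Da ≠ 0)
    (h : ∀ p : ℕ, p.Prime → x ^ (Da / p ^ Da.factorization p) = 1)
    (hda : x ^ Da = 1) : x = 1 := by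
  have aux : ∀ N : ℕ, ∀ n : ℕ, n ≤ N → n ≠ 0 → n ∣ Da → x ^ n = 1 → x = 1 := by
    intro N
    induction N with
    | zero => intro n hn h0 _ _; omega
    | succ N ih =>
        intro n hn h0 hdvd hx
        by_cases h1 : n = 1
        · simpa [h1] using hx
        · obtain ⟨p, hp, hpn⟩ := Nat.exists_prime_and_dvd h1
          set g := Nat.gcd n (Da / p ^ Da.factorization p) with hg
          have hordn : orderOf x ∣ n := orderOf_dvd_of_pow_eq_one hx
          have hordq : orderOf x ∣ Da / p ^ Da.factorization p :=
            orderOf_dvd_of_pow_eq_one (h p hp)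
          have hxg : x ^ g = 1 :=
            orderOf_dvd_iff_pow_eq_one.mp (Nat.dvd_gcd hordn hordq)
          have hgDa : g ∣ Da := (Nat.gcd_dvd_right _ _).trans (Nat.ordCompl_dvd Da p)
          have hg0 : g ≠ 0 := by
            intro hgz
            exact h0 (Nat.eq_zero_of_gcd_eq_zero_left (hg ▸ hgz))
          have hpg : ¬ p ∣ g := fun hcon =>
            (Nat.not_dvd_ordCompl hp hDa0) (hcon.trans (Nat.gcd_dvd_right _ _))
          have hgn : g < n := by
            have hle : g ≤ n := Nat.le_of_dvd (by omega) (Nat.gcd_dvd_left _ _)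
            rcases lt_or_eq_of_le hle with h | h
            · exact h
            · exact absurd (h ▸ hpn) hpg
          exact ih g (by omega) hg0 hgDa hxg
  exact aux Da Da le_rfl hDa0 dvd_rfl hda


variable {Q : Type*} [Group Q]

lemma core (z : ℤ → Q) (μ m' n' : ℤ) (p Da : ℕ)
    (hp : p.Prime) (hDa0 : Da ≠ 0)
    (hDa : ∀ s, z s ^ ((Da : ℤ)) = 1)
    (hpμ : ¬ ((p:ℤ) ∣ μ)) (hpn' : ¬ ((p:ℤ) ∣ n'))
    (h0 : z 0 = 1)
    (hR2 : ∀ s, z s ^ (μ * m') = z (s+1) ^ (μ * n')) :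
    ∀ s, z s ^ ((Da / p ^ Da.factorization p : ℕ) : ℤ) = 1 := by
  have hpZ : Prime ((p : ℤ)) := Nat.prime_iff_prime_int.mp hp
  set V := Da.factorization p with hV
  set Qp : ℕ := Da / p ^ V with hQp
  have hQpV : (p:ℕ) ^ V * Qp = Da := Nat.ordProj_mul_ordCompl_eq_self Da p
  have hcop : IsCoprime ((p:ℤ)) (μ * n') := by
    rw [hpZ.coprime_iff_not_dvd]
    intro hdvd
    rcases hpZ.dvd_mul.mp hdvd with h | h
    · exact hpμ h
    · exact hpn' h
  by_cases hm : (p:ℤ) ∣ m'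
  · -- descent
    obtain ⟨m₂, hm₂⟩ := hm
    have key : ∀ j : ℕ, ∀ s, z s ^ (((Qp * p ^ (V - j) : ℕ)) : ℤ) = 1 := by
      intro j
      induction j with
      | zero =>
          intro s
          have : (Qp * p ^ (V - 0) : ℕ) = Da := by
            rw [Nat.sub_zero, mul_comm]; exact hQpV
          rw [this]; exact hDa s
      | succ j ih =>
          intro s
          have hstep : z (s-1) ^ (μ * m') = z s ^ (μ * n') := by
            have := hR2 (s-1)
            rwa [sub_add_cancel] at this
          -- h1 : z s ^ ((μ*n') * E) = 1
          have hdvd1 : ((Qp * p ^ (V - j) : ℕ) : ℤ) ∣ (μ * m') * ((Qp * p ^ (V - (j+1)) : ℕ) : ℤ) := by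
            push_cast
            rw [hm₂]
            have hpow : ((p:ℤ)) ^ (V - j) ∣ ((p:ℤ)) ^ ((V - (j+1)) + 1) :=
              pow_dvd_pow _ (by omega)
            calc ((Qp:ℤ)) * (p:ℤ) ^ (V - j) ∣ ((Qp:ℤ)) * ((p:ℤ) ^ ((V - (j+1)) + 1)) :=
                  mul_dvd_mul_left _ hpow
            _ ∣ μ * ((p:ℤ) * m₂) * ((Qp:ℤ) * (p:ℤ) ^ (V - (j+1))) := by
                  refine Dvd.intro_left (μ * m₂) ?_
                  ring
          have h1 : z s ^ ((μ * n') * ((Qp * p ^ (V - (j+1)) : ℕ) : ℤ)) = 1 := by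
            rw [zpow_mul, ← hstep, ← zpow_mul]
            exact zpow_eq_one_of_dvd (ih (s-1)) hdvd1
          have h2 : z s ^ ((p:ℤ) * ((Qp * p ^ (V - (j+1)) : ℕ) : ℤ)) = 1 := by
            refine zpow_eq_one_of_dvd (ih s) ?_
            push_cast
            have hpow : ((p:ℤ)) ^ (V - j) ∣ ((p:ℤ)) ^ ((V - (j+1)) + 1) :=
              pow_dvd_pow _ (by omega)
            calc ((Qp:ℤ)) * (p:ℤ) ^ (V - j) ∣ ((Qp:ℤ)) * ((p:ℤ) ^ ((V - (j+1)) + 1)) :=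
                  mul_dvd_mul_left _ hpow
            _ = (p:ℤ) * ((Qp:ℤ) * (p:ℤ) ^ (V - (j+1))) := by ring
          exact bezout_combine hcop h2 h1
    intro s
    have := key V s
    rwa [Nat.sub_self, pow_zero, mul_one] at this
  · -- propagation
    have hcop2 : IsCoprime ((p:ℤ)) (μ * m') := by
      rw [hpZ.coprime_iff_not_dvd]
      intro hdvd
      rcases hpZ.dvd_mul.mp hdvd with h | h
      · exact hpμ h
      · exact hm h
    have hDa' : ∀ s, z s ^ (((p:ℤ)) ^ V * ((Qp : ℕ) : ℤ)) = 1 := by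
      intro s
      refine zpow_eq_one_of_dvd (hDa s) ?_
      rw [← hQpV]; push_cast; exact dvd_rfl
    have main : ∀ s : ℤ, z s ^ ((Qp : ℕ) : ℤ) = 1 := by
      intro s
      induction s using Int.induction_on with
      | zero => rw [h0, one_zpow]
      | succ i ih =>
          have h1 : z ((i:ℤ)+1) ^ ((μ * n') * ((Qp:ℕ):ℤ)) = 1 := by
            rw [zpow_mul, ← hR2 (i:ℤ), ← zpow_mul]
            exact zpow_eq_one_of_dvd ih (dvd_mul_left _ _)
          exact bezout_combine (hcop.pow_left (m := V)) (hDa' _) h1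
      | pred i ih =>
          have h1 : z (-(i:ℤ)-1) ^ ((μ * m') * ((Qp:ℕ):ℤ)) = 1 := by
            have hst := hR2 (-(i:ℤ)-1)
            rw [sub_add_cancel] at hst
            rw [zpow_mul, hst, ← zpow_mul]
            exact zpow_eq_one_of_dvd ih (dvd_mul_left _ _)
          exact bezout_combine (hcop2.pow_left (m := V)) (hDa' _) h1
    exact main


variable {Q : Type*} [Group Q]

lemma keyLemma (z : ℤ → Q) (μ ν m' n' : ℤ)
    (hμ0 : μ ≠ 0) (hν0 : ν ≠ 0)
    (hcop1 : IsCoprime μ ν) (hcop2 : IsCoprime m' n')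
    (h0 : z 0 = 1)
    (hR1 : ∀ s, z s ^ (ν * m') = z (s-1) ^ (ν * n'))
    (hR2 : ∀ s, z s ^ (μ * m') = z (s+1) ^ (μ * n')) :
    ∀ s, z s = 1 := by
  have sq_trick : ∀ (w : Q) (e ε : ℤ), ε * ε = 1 → w ^ (e * ε) = 1 → w ^ e = 1 := by
    intro w e ε hε h
    calc w ^ e = w ^ (e * (ε * ε)) := by rw [hε, mul_one]
    _ = (w ^ (e * ε)) ^ ε := by rw [← zpow_mul, mul_assoc]
    _ = 1 := by rw [h, one_zpow]
  by_cases hsq : m' * m' = n' * n'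
  · -- edge case: m', n' units
    have hmu : IsUnit m' :=
      (hcop2.mul_right hcop2).isUnit_of_dvd' dvd_rfl ⟨m', hsq.symm⟩
    have hnu : IsUnit n' :=
      (hcop2.symm.mul_right hcop2.symm).isUnit_of_dvd' dvd_rfl ⟨n', hsq⟩
    have hm2 : m' * m' = 1 := by
      rcases Int.isUnit_iff.mp hmu with h | h <;> rw [h] <;> norm_num
    have hn2 : n' * n' = 1 := by
      rcases Int.isUnit_iff.mp hnu with h | h <;> rw [h] <;> norm_num
    have hε : (n' * m') * (n' * m') = 1 := by
      calc (n' * m') * (n' * m') = (n' * n') * (m' * m') := by ring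
      _ = 1 := by rw [hm2, hn2, mul_one]
    have both : ∀ s : ℤ, z s ^ ν = 1 ∧ z s ^ μ = 1 := by
      intro s
      induction s using Int.induction_on with
      | zero => constructor <;> rw [h0, one_zpow]
      | succ i ih =>
          constructor
          · calc z ((i:ℤ)+1) ^ ν = z ((i:ℤ)+1) ^ (ν * (m' * m')) := by rw [hm2, mul_one]
            _ = (z ((i:ℤ)+1) ^ (ν * m')) ^ m' := by rw [← mul_assoc]; exact zpow_mul _ _ _
            _ = (z (i:ℤ) ^ (ν * n')) ^ m' := by
                have h' := hR1 ((i:ℤ)+1)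
                rw [show ((i:ℤ) + 1 - 1 : ℤ) = (i:ℤ) by ring] at h'
                rw [h']
            _ = ((z (i:ℤ) ^ ν) ^ n') ^ m' := by rw [zpow_mul]
            _ = 1 := by rw [ih.1, one_zpow, one_zpow]
          · have hchain : z ((i:ℤ)+1) ^ (μ * (n' * m')) = 1 := by
              calc z ((i:ℤ)+1) ^ (μ * (n' * m'))
                  = (z ((i:ℤ)+1) ^ (μ * n')) ^ m' := by rw [← mul_assoc]; exact zpow_mul _ _ _
              _ = (z (i:ℤ) ^ (μ * m')) ^ m' := by rw [← hR2 (i:ℤ)]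
              _ = ((z (i:ℤ) ^ μ) ^ m') ^ m' := by rw [zpow_mul]
              _ = 1 := by rw [ih.2, one_zpow, one_zpow]
            exact sq_trick _ μ (n' * m') hε hchain
      | pred i ih =>
          constructor
          · have hchain : z (-(i:ℤ)-1) ^ (ν * (n' * m')) = 1 := by
              calc z (-(i:ℤ)-1) ^ (ν * (n' * m'))
                  = (z (-(i:ℤ)-1) ^ (ν * n')) ^ m' := by rw [← mul_assoc]; exact zpow_mul _ _ _
              _ = (z (-(i:ℤ)) ^ (ν * m')) ^ m' := by
                  have h' := hR1 (-(i:ℤ))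
                  rw [show (-(i:ℤ) - 1 : ℤ) = -(i:ℤ)-1 by ring] at h'
                  rw [← h']
              _ = ((z (-(i:ℤ)) ^ ν) ^ m') ^ m' := by rw [zpow_mul]
              _ = 1 := by rw [ih.1, one_zpow, one_zpow]
            exact sq_trick _ ν (n' * m') hε hchain
          · calc z (-(i:ℤ)-1) ^ μ = z (-(i:ℤ)-1) ^ (μ * (m' * m')) := by rw [hm2, mul_one]
            _ = (z (-(i:ℤ)-1) ^ (μ * m')) ^ m' := by rw [← mul_assoc]; exact zpow_mul _ _ _
            _ = (z (-(i:ℤ)) ^ (μ * n')) ^ m' := by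
                have h' := hR2 (-(i:ℤ)-1)
                rw [show (-(i:ℤ) - 1 + 1 : ℤ) = -(i:ℤ) by ring] at h'
                rw [h']
            _ = ((z (-(i:ℤ)) ^ μ) ^ n') ^ m' := by rw [zpow_mul]
            _ = 1 := by rw [ih.2, one_zpow, one_zpow]
    intro s
    obtain ⟨α, β, hαβ⟩ := hcop1
    calc z s = z s ^ (μ * α + ν * β) := by
          rw [show (μ * α + ν * β : ℤ) = 1 by linear_combination hαβ, zpow_one]
    _ = (z s ^ μ) ^ α * (z s ^ ν) ^ β := by
          rw [zpow_add, zpow_mul (z s) μ α, zpow_mul (z s) ν β]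
    _ = 1 := by rw [(both s).1, (both s).2, one_zpow, one_zpow, one_mul]
  · -- main case
    have hD0 : μ * ν * (m' * m' - n' * n') ≠ 0 := by
      refine mul_ne_zero (mul_ne_zero hμ0 hν0) ?_
      exact sub_ne_zero.mpr hsq
    set D : ℤ := μ * ν * (m' * m' - n' * n') with hD
    set Da : ℕ := D.natAbs with hDaDef
    have hDa0 : Da ≠ 0 := Int.natAbs_ne_zero.mpr hD0
    -- uniform torsion
    have hDtor : ∀ s, z s ^ D = 1 := by
      intro s
      have hA : z s ^ ((ν * m') * (μ * m')) = z s ^ ((μ * n') * (ν * n')) := by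
        calc z s ^ ((ν * m') * (μ * m')) = (z s ^ (ν * m')) ^ (μ * m') :=
              zpow_mul _ _ _
        _ = (z (s-1) ^ (ν * n')) ^ (μ * m') := by rw [hR1]
        _ = z (s-1) ^ ((ν * n') * (μ * m')) := (zpow_mul _ _ _).symm
        _ = z (s-1) ^ ((μ * m') * (ν * n')) := by rw [mul_comm (ν * n') (μ * m')]
        _ = (z (s-1) ^ (μ * m')) ^ (ν * n') := zpow_mul _ _ _
        _ = (z s ^ (μ * n')) ^ (ν * n') := by
              have h' := hR2 (s-1); rw [sub_add_cancel] at h'; rw [h']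
        _ = z s ^ ((μ * n') * (ν * n')) := (zpow_mul _ _ _).symm
      have : z s ^ ((ν * m') * (μ * m') - (μ * n') * (ν * n')) = 1 := by
        rw [zpow_sub, hA, mul_inv_cancel]
      have hre : D = (ν * m') * (μ * m') - (μ * n') * (ν * n') := by ring
      rw [hre]; exact this
    have hDa : ∀ s, z s ^ ((Da : ℤ)) = 1 := by
      intro s
      rcases Int.natAbs_eq D with h | h
      · rw [← h]; exact hDtor s
      · have hcast : ((Da:ℤ)) = -D := by omega
        rw [hcast, zpow_neg, hDtor s, inv_one]
    -- per prime
    have perprime : ∀ p : ℕ, p.Prime → ∀ s, z s ^ ((Da / p ^ Da.factorization p : ℕ) : ℤ) = 1 := by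
      intro p hp
      have hpZ : Prime ((p:ℤ)) := Nat.prime_iff_prime_int.mp hp
      have hnotboth1 : ¬ ((p:ℤ) ∣ μ) ∨ ¬ ((p:ℤ) ∣ ν) := by
        by_contra hcon
        push_neg at hcon
        obtain ⟨h1, h2⟩ := hcon
        exact hpZ.not_unit (hcop1.isUnit_of_dvd' h1 h2)
      have hnotboth2 : ¬ ((p:ℤ) ∣ m') ∨ ¬ ((p:ℤ) ∣ n') := by
        by_contra hcon
        push_neg at hcon
        obtain ⟨h1, h2⟩ := hcon
        exact hpZ.not_unit (hcop2.isUnit_of_dvd' h1 h2)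
      rcases hnotboth1 with hpμ | hpν
      · rcases hnotboth2 with hpm' | hpn'
        · -- ¬p∣μ, ¬p∣m' : if also ¬p∣n' use config1 else config2
          by_cases hpn' : ((p:ℤ) ∣ n')
          · -- config2 : core (z ∘ neg) μ n' m'
            have hR2' : ∀ s : ℤ, z (-s) ^ (μ * n') = z (-(s+1)) ^ (μ * m') := by
              intro s
              have := hR2 (-(s+1))
              rw [show (-(s+1) + 1 : ℤ) = -s by ring] at this
              exact this.symm
            intro s
            have := core (fun s => z (-s)) μ n' m' p Da hp hDa0 (fun s => hDa (-s))
              hpμ hpm' (by simpa using h0) hR2' (-s)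
            simpa using this
          · -- config1
            exact core z μ m' n' p Da hp hDa0 hDa hpμ hpn' h0 hR2
        · -- ¬p∣μ, ¬p∣n' : config1
          exact core z μ m' n' p Da hp hDa0 hDa hpμ hpn' h0 hR2
      · rcases hnotboth2 with hpm' | hpn'
        · -- ¬p∣ν, ¬p∣m'
          by_cases hpn' : ((p:ℤ) ∣ n')
          · -- config4 : core z ν n' m'
            have hR2''' : ∀ s : ℤ, z s ^ (ν * n') = z (s+1) ^ (ν * m') := by
              intro s
              have := hR1 (s+1)
              rw [show ((s+1) - 1 : ℤ) = s by ring] at this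
              exact this.symm
            exact core z ν n' m' p Da hp hDa0 hDa hpν hpm' h0 hR2'''
          · -- config3 : core (z ∘ neg) ν m' n'
            have hR2'' : ∀ s : ℤ, z (-s) ^ (ν * m') = z (-(s+1)) ^ (ν * n') := by
              intro s
              have := hR1 (-s)
              rw [show ((-s) - 1 : ℤ) = -(s+1) by ring] at this
              exact this
            intro s
            have := core (fun s => z (-s)) ν m' n' p Da hp hDa0 (fun s => hDa (-s))
              hpν hpn' (by simpa using h0) hR2'' (-s)
            simpa using this
        · -- ¬p∣ν, ¬p∣n' : config3
          have hR2'' : ∀ s : ℤ, z (-s) ^ (ν * m') = z (-(s+1)) ^ (ν * n') := by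
            intro s
            have := hR1 (-s)
            rw [show ((-s) - 1 : ℤ) = -(s+1) by ring] at this
            exact this
          intro s
          have := core (fun s => z (-s)) ν m' n' p Da hp hDa0 (fun s => hDa (-s))
            hpν hpn' (by simpa using h0) hR2'' (-s)
          simpa using this
    intro s
    refine assemble hDa0 (fun p hp => ?_) ?_
    · have := perprime p hp s
      rwa [zpow_natCast] at this
    · have := hDa s
      rwa [zpow_natCast] at this


def u (t a : Q) (s : ℤ) : Q := t ^ (-s) * a * t ^ s

def zf (t a : Q) (μ ν : ℤ) (s : ℤ) : Q := commElt ((u t a s) ^ μ) (a ^ ν)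

variable {Q : Type*} [Group Q]

lemma map_commElt {R : Type*} [Group R] (φ : Q →* R) (x y : Q) :
    φ (commElt x y) = commElt (φ x) (φ y) := by
  simp [commElt, map_mul, map_inv]

lemma conj_commElt (g x y : Q) :
    commElt (g * x * g⁻¹) (g * y * g⁻¹) = g * commElt x y * g⁻¹ := by
  unfold commElt; group

lemma conj_zpow'' (g x : Q) (e : ℤ) : (g * x * g⁻¹) ^ e = g * x ^ e * g⁻¹ := by
  have := map_zpow (MulAut.conj g).toMonoidHom x e
  simpa [MulAut.conj_apply] using this

/-- conjugate powers in the `t^(-s) * b * t^s` form -/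
lemma conj_form_zpow (t b : Q) (s e : ℤ) :
    (t ^ (-s) * b * t ^ s) ^ e = t ^ (-s) * b ^ e * t ^ s := by
  have h1 : t ^ s = (t ^ (-s))⁻¹ := by rw [zpow_neg, inv_inv]
  rw [h1, conj_zpow'']

section Engine
variable (t a : Q) (μ ν m' n' m n : ℤ)


lemma engine
    (hm : m = μ * ν * m') (hn : n = μ * ν * n')
    (hμ0 : μ ≠ 0) (hν0 : ν ≠ 0)
    (hcop1 : IsCoprime μ ν) (hcop2 : IsCoprime m' n')
    (hrel : t⁻¹ * a ^ m * t = a ^ n)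
    (hcent : ∀ (s : ℤ) (g : Q), zf t a μ ν s * g = g * zf t a μ ν s) :
    ∀ s : ℤ, zf t a μ ν s = 1 := by
  -- basic facts
  have hu0 : u t a 0 = a := by simp [u]
  have ha_m : a ^ m = t * a ^ n * t⁻¹ := by rw [← hrel]; group
  have hurel : ∀ s : ℤ, (u t a s) ^ m = (u t a (s-1)) ^ n := by
    intro s
    rw [u, conj_form_zpow, ha_m, u, conj_form_zpow]
    have h1 : t ^ (-s) * t = t ^ (-(s-1)) := by
      rw [show (-(s-1) : ℤ) = -s + 1 by ring, zpow_add_one]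
    have h2 : t⁻¹ * t ^ s = t ^ (s-1) := by
      rw [show (s-1 : ℤ) = -1 + s by ring, zpow_add, zpow_neg_one]
    calc t ^ (-s) * (t * a ^ n * t⁻¹) * t ^ s
        = (t ^ (-s) * t) * a ^ n * (t⁻¹ * t ^ s) := by group
    _ = t ^ (-(s-1)) * a ^ n * t ^ (s-1) := by rw [h1, h2]
  -- shift lemma
  have hshift : ∀ i j : ℤ,
      commElt ((u t a i) ^ μ) ((u t a j) ^ ν) = zf t a μ ν (i - j) := by
    intro i j
    have hg : ∀ x : ℤ, t ^ (-j) * (u t a x) * (t ^ (-j))⁻¹ = u t a (x + j) := by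
      intro x
      have hinv : (t ^ (-j))⁻¹ = t ^ j := by rw [zpow_neg, inv_inv]
      rw [hinv, u, u]
      have h1 : t ^ (-j) * t ^ (-x) = t ^ (-(x+j)) := by
        rw [← zpow_add]; ring_nf
      have h2 : t ^ x * t ^ j = t ^ (x+j) := by rw [← zpow_add]
      calc t ^ (-j) * (t ^ (-x) * a * t ^ x) * t ^ j
          = (t ^ (-j) * t ^ (-x)) * a * (t ^ x * t ^ j) := by group
      _ = t ^ (-(x+j)) * a * t ^ (x+j) := by rw [h1, h2]
    set g := t ^ (-j) with hgdef
    have e1 : (u t a i) ^ μ = g * ((u t a (i-j)) ^ μ) * g⁻¹ := by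
      rw [← conj_zpow'']
      rw [hg (i-j), show (i - j + j : ℤ) = i by ring]
    have e2 : (u t a j) ^ ν = g * (a ^ ν) * g⁻¹ := by
      rw [← conj_zpow'']
      have := hg 0
      rw [hu0] at this
      rw [this, zero_add]
    rw [e1, e2, conj_commElt]
    have : commElt ((u t a (i-j)) ^ μ) (a ^ ν) = zf t a μ ν (i-j) := rfl
    rw [this]
    have hc := hcent (i-j) g
    rw [← hc]; group
  -- centrality of shifted commutators
  have hcent_shift : ∀ i j : ℤ, ∀ g : Q,
      commElt ((u t a i) ^ μ) ((u t a j) ^ ν) * g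
        = g * commElt ((u t a i) ^ μ) ((u t a j) ^ ν) := by
    intro i j g
    rw [hshift i j]; exact hcent _ g
  -- R1
  have hR1 : ∀ s : ℤ, zf t a μ ν s ^ (ν * m') = zf t a μ ν (s-1) ^ (ν * n') := by
    intro s
    have c1 : ∀ g : Q, commElt ((u t a s) ^ μ) (a ^ ν) * g
        = g * commElt ((u t a s) ^ μ) (a ^ ν) := hcent s
    have c2 : ∀ g : Q, commElt ((u t a (s-1)) ^ μ) (a ^ ν) * g
        = g * commElt ((u t a (s-1)) ^ μ) (a ^ ν) := hcent (s-1)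
    have e1 : zf t a μ ν s ^ (ν * m')
        = commElt (((u t a s) ^ μ) ^ (ν * m')) ((a ^ ν) ^ (1:ℤ)) := by
      rw [commElt_zpow _ _ c1, mul_one]
      rfl
    have e2 : ((u t a s) ^ μ) ^ (ν * m') = (u t a s) ^ m := by
      rw [← zpow_mul, hm]; ring_nf
    have e3 : (u t a (s-1)) ^ n = ((u t a (s-1)) ^ μ) ^ (ν * n') := by
      rw [← zpow_mul, hn]; ring_nf
    rw [e1, e2, hurel s, e3]
    rw [commElt_zpow _ _ c2, mul_one]
    rfl
  -- R2
  have hR2 : ∀ s : ℤ, zf t a μ ν s ^ (μ * m') = zf t a μ ν (s+1) ^ (μ * n') := by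
    intro s
    have c1 : ∀ g : Q, commElt ((u t a s) ^ μ) (a ^ ν) * g
        = g * commElt ((u t a s) ^ μ) (a ^ ν) := hcent s
    have e1 : zf t a μ ν s ^ (μ * m')
        = commElt (((u t a s) ^ μ) ^ (1:ℤ)) ((a ^ ν) ^ (μ * m')) := by
      rw [commElt_zpow _ _ c1, one_mul]
      rfl
    have e2 : (a ^ ν) ^ (μ * m') = a ^ m := by
      rw [← zpow_mul, hm]; ring_nf
    have e3 : a ^ m = ((u t a (-1)) ^ ν) ^ (μ * n') := by
      have hm1 : (u t a (-1)) ^ n = a ^ m := by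
        have := hurel 0
        rw [hu0, show ((0:ℤ)-1 : ℤ) = -1 by ring] at this
        exact this.symm
      rw [← hm1, ← zpow_mul, hn]; ring_nf
    have c3 : ∀ g : Q, commElt ((u t a s) ^ μ) ((u t a (-1)) ^ ν) * g
        = g * commElt ((u t a s) ^ μ) ((u t a (-1)) ^ ν) := hcent_shift s (-1)
    rw [e1, e2, e3]
    have e4 : commElt (((u t a s) ^ μ) ^ (1:ℤ)) (((u t a (-1)) ^ ν) ^ (μ * n'))
        = commElt ((u t a s) ^ μ) ((u t a (-1)) ^ ν) ^ ((1:ℤ) * (μ * n')) := by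
      have := commElt_zpow ((u t a s) ^ μ) ((u t a (-1)) ^ ν) c3 (1:ℤ) (μ * n')
      rw [← this]
    rw [e4, hshift s (-1), show (s - (-1) : ℤ) = s + 1 by ring, one_mul]
  -- z 0 = 1
  have h0 : zf t a μ ν 0 = 1 := by
    rw [zf, hu0]
    have : (a ^ μ)⁻¹ * (a ^ ν)⁻¹ * a ^ μ * a ^ ν = 1 := by
      rw [← zpow_neg, ← zpow_neg, ← zpow_add, ← zpow_add, ← zpow_add]
      rw [show (-μ + -ν + μ + ν : ℤ) = 0 by ring]
      exact zpow_zero a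
    exact this
  exact keyLemma (zf t a μ ν) μ ν m' n' hμ0 hν0 hcop1 hcop2 h0 hR1 hR2

end Engine

variable {Q : Type*} [Group Q]


lemma mod_lemma (t a : Q) (μ ν m' n' m n : ℤ)
    (hm : m = μ * ν * m') (hn : n = μ * ν * n')
    (hμ0 : μ ≠ 0) (hν0 : ν ≠ 0)
    (hcop1 : IsCoprime μ ν) (hcop2 : IsCoprime m' n')
    (hrel : t⁻¹ * a ^ m * t = a ^ n)
    (H : Subgroup Q) [H.Normal]
    (hzH : ∀ (s : ℤ) (g : Q), commElt (zf t a μ ν s) g ∈ H) :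
    ∀ s : ℤ, zf t a μ ν s ∈ H := by
  set π := QuotientGroup.mk' H with hπ
  have hπz : ∀ s : ℤ, π (zf t a μ ν s) = zf (π t) (π a) μ ν s := by
    intro s
    simp [zf, u, commElt, map_mul, map_inv, map_zpow]
  have hrel' : (π t)⁻¹ * (π a) ^ m * (π t) = (π a) ^ n := by
    rw [← map_inv, ← map_zpow, ← map_zpow, ← map_mul, ← map_mul, hrel]
  have hcent' : ∀ (s : ℤ) (g' : Q ⧸ H),
      zf (π t) (π a) μ ν s * g' = g' * zf (π t) (π a) μ ν s := by
    intro s g'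
    obtain ⟨g, rfl⟩ := QuotientGroup.mk'_surjective H g'
    rw [← hπz, ← map_mul, ← map_mul]
    have key : (zf t a μ ν s * g)⁻¹ * (g * zf t a μ ν s)
        = (commElt (zf t a μ ν s) g)⁻¹ := by
      unfold commElt; group
    have : π (zf t a μ ν s * g) = π (g * zf t a μ ν s) := by
      rw [QuotientGroup.mk'_apply, QuotientGroup.mk'_apply, QuotientGroup.eq]
      rw [key]
      exact inv_mem (hzH s g)
    exact this
  intro s
  have h1 : zf (π t) (π a) μ ν s = 1 :=
    engine (π t) (π a) μ ν m' n' m n hm hn hμ0 hν0 hcop1 hcop2 hrel' hcent' s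
  have h2 : π (zf t a μ ν s) = 1 := by rw [hπz, h1]
  rwa [QuotientGroup.mk'_apply, QuotientGroup.eq_one_iff] at h2

instance lcsOmega_normal : (lcsOmega Q).Normal := by
  constructor
  intro x hx g
  rw [lcsOmega, Subgroup.mem_iInf] at *
  intro c
  exact Subgroup.Normal.conj_mem inferInstance x (hx c) g

open scoped commutatorElement in
lemma commElt_eq_commutator (x y : Q) : commElt x y = ⁅x⁻¹, y⁻¹⁆ := by
  rw [commutatorElement_def, commElt]
  group

open scoped commutatorElement in
lemma phase1 (t a : Q) (μ ν m' n' m n : ℤ)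
    (hm : m = μ * ν * m') (hn : n = μ * ν * n')
    (hμ0 : μ ≠ 0) (hν0 : ν ≠ 0)
    (hcop1 : IsCoprime μ ν) (hcop2 : IsCoprime m' n')
    (hrel : t⁻¹ * a ^ m * t = a ^ n) :
    ∀ (c : ℕ) (s : ℤ), zf t a μ ν s ∈ (⊤ : Subgroup Q).lowerCentralSeries c := by
  intro c
  induction c with
  | zero => intro s; rw [Subgroup.lowerCentralSeries_zero]; exact Subgroup.mem_top _
  | succ c ih =>
      have hzH : ∀ (s : ℤ) (g : Q),
          commElt (zf t a μ ν s) g ∈ (⊤ : Subgroup Q).lowerCentralSeries (c+1) := by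
        intro s g
        rw [commElt_eq_commutator]
        have hmem : ⁅(zf t a μ ν s)⁻¹, g⁻¹⁆
            ∈ ⁅(⊤ : Subgroup Q).lowerCentralSeries c, (⊤ : Subgroup Q)⁆ :=
          Subgroup.commutator_mem_commutator (inv_mem (ih s)) (Subgroup.mem_top _)
        exact hmem
      exact mod_lemma t a μ ν m' n' m n hm hn hμ0 hν0 hcop1 hcop2 hrel
        ((⊤ : Subgroup Q).lowerCentralSeries (c+1)) hzH

lemma phase2 (t a : Q) (μ ν m' n' m n : ℤ)
    (hm : m = μ * ν * m') (hn : n = μ * ν * n')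
    (hμ0 : μ ≠ 0) (hν0 : ν ≠ 0)
    (hcop1 : IsCoprime μ ν) (hcop2 : IsCoprime m' n')
    (hrel : t⁻¹ * a ^ m * t = a ^ n) :
    ∀ s : ℤ, zf t a μ ν s ∈ ⁅lcsOmega Q, (⊤ : Subgroup Q)⁆ := by
  have hN : ∀ s : ℤ, zf t a μ ν s ∈ lcsOmega Q := by
    intro s
    rw [lcsOmega, Subgroup.mem_iInf]
    exact fun c => phase1 t a μ ν m' n' m n hm hn hμ0 hν0 hcop1 hcop2 hrel c s
  have hzH : ∀ (s : ℤ) (g : Q),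
      commElt (zf t a μ ν s) g ∈ ⁅lcsOmega Q, (⊤ : Subgroup Q)⁆ := by
    intro s g
    rw [commElt_eq_commutator]
    exact Subgroup.commutator_mem_commutator (inv_mem (hN s)) (Subgroup.mem_top _)
  exact mod_lemma t a μ ν m' n' m n hm hn hμ0 hν0 hcop1 hcop2 hrel _ hzH


variable {Q : Type*} [Group Q]
lemma bs_rel (m n : ℤ) :
    (BS.t m n)⁻¹ * (BS.a m n) ^ m * BS.t m n = (BS.a m n) ^ n := by
  have hr : ((FreeGroup.of 0)⁻¹ * (FreeGroup.of 1) ^ m * FreeGroup.of 0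
      * ((FreeGroup.of 1) ^ n)⁻¹ : FreeGroup (Fin 2)) ∈ BSRels m n := rfl
  have h1 : PresentedGroup.mk (BSRels m n)
      ((FreeGroup.of 0)⁻¹ * (FreeGroup.of 1) ^ m * FreeGroup.of 0
        * ((FreeGroup.of 1) ^ n)⁻¹) = 1 :=
    (QuotientGroup.eq_one_iff _).2 (Subgroup.subset_normalClosure hr)
  rw [map_mul, map_mul, map_mul, map_inv, map_inv, map_zpow, map_zpow] at h1
  have ht : PresentedGroup.mk (BSRels m n) (FreeGroup.of 0) = BS.t m n := rfl
  have ha : PresentedGroup.mk (BSRels m n) (FreeGroup.of 1) = BS.a m n := rfl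
  rw [ht, ha] at h1
  exact mul_inv_eq_one.mp h1


end Stmt18


open Stmt18

theorem stmt18 (m n : ℤ) (hm : 0 < m) (hmn : m ≤ |n|) (d : ℕ) (hd : (d : ℤ) = Int.gcd m n)
    (μ ν : ℕ) (hμ : 1 ≤ μ) (hν : 1 ≤ ν) (hμd : μ ≤ d) (hνd : ν ≤ d)
    (hcop : Nat.gcd μ ν = 1) (hμν : μ * ν = d) (k : ℤ) :
    commElt ((BS.t m n) ^ (-k) * (BS.a m n) ^ (μ : ℤ) * (BS.t m n) ^ k) ((BS.a m n) ^ (ν : ℤ))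
      ∈ ⁅lcsOmega (BS m n), (⊤ : Subgroup (BS m n))⁆ := by
  have hrel := bs_rel m n
  -- numbers
  have hdgcd : d = Int.gcd m n := Nat.cast_injective hd
  have hm0 : m ≠ 0 := ne_of_gt hm
  have hgcd_pos : 0 < Int.gcd m n := Int.gcd_pos_of_ne_zero_left n hm0
  have hdpos : (0:ℤ) < (d:ℤ) := by rw [hd]; exact_mod_cast hgcd_pos
  have hdvdm : (d:ℤ) ∣ m := by rw [hd]; exact Int.gcd_dvd_left m n
  have hdvdn : (d:ℤ) ∣ n := by rw [hd]; exact Int.gcd_dvd_right m n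
  set m' : ℤ := m / (d:ℤ) with hm'def
  set n' : ℤ := n / (d:ℤ) with hn'def
  have hmfac : m = (μ:ℤ) * (ν:ℤ) * m' := by
    have h1 : (d:ℤ) * m' = m := Int.mul_ediv_cancel' hdvdm
    have h2 : ((μ:ℤ) * (ν:ℤ)) = (d:ℤ) := by exact_mod_cast congrArg (Nat.cast : ℕ → ℤ) hμν
    rw [h2]; exact h1.symm
  have hnfac : n = (μ:ℤ) * (ν:ℤ) * n' := by
    have h1 : (d:ℤ) * n' = n := Int.mul_ediv_cancel' hdvdn
    have h2 : ((μ:ℤ) * (ν:ℤ)) = (d:ℤ) := by exact_mod_cast congrArg (Nat.cast : ℕ → ℤ) hμν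
    rw [h2]; exact h1.symm
  have hμ0 : (μ:ℤ) ≠ 0 := by exact_mod_cast Nat.one_le_iff_ne_zero.mp hμ
  have hν0 : (ν:ℤ) ≠ 0 := by exact_mod_cast Nat.one_le_iff_ne_zero.mp hν
  have hcop1 : IsCoprime ((μ:ℤ)) ((ν:ℤ)) := by
    rw [Int.isCoprime_iff_gcd_eq_one, Int.gcd_natCast_natCast]
    exact hcop
  have hcop2 : IsCoprime m' n' := by
    rw [Int.isCoprime_iff_gcd_eq_one, hm'def, hn'def, hd]
    exact Int.gcd_div_gcd_div_gcd hgcd_pos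
  have hmain := phase2 (BS.t m n) (BS.a m n) (μ:ℤ) (ν:ℤ) m' n' m n
    hmfac hnfac hμ0 hν0 hcop1 hcop2 hrel k
  have hzeq : zf (BS.t m n) (BS.a m n) (μ:ℤ) (ν:ℤ) k
      = commElt ((BS.t m n) ^ (-k) * (BS.a m n) ^ (μ : ℤ) * (BS.t m n) ^ k)
          ((BS.a m n) ^ (ν : ℤ)) := by
    rw [zf, u, conj_form_zpow]
  rwa [hzeq] at hmain
end
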